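/- Let L : ℝ^d → ℝ be H-smooth with respect to the ℓ∞ norm and bounded below. If SignGD is run for T steps with the step size η = √(2(L(x₀) - inf L)/(TH)), then min_{0 ≤ t < T} ‖∇L(x_t)‖₁ ≤ √(2H(L(x₀) - inf L)/T). -/

import Mathlib

lemma sgd_descent (d : ℕ) (L : (Fin d → ℝ) → ℝ) (grad : (Fin d → ℝ) → (Fin d → ℝ))
    (H : ℝ) (hH : 0 ≤ H)
    (hderiv : ∀ x, HasFDerivAt L
      (∑ i, grad x i • (ContinuousLinearMap.proj i : (Fin d → ℝ) →L[ℝ] ℝ)) x)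
    (hsmooth : ∀ x y, ∑ i, |grad x i - grad y i| ≤ H * ‖x - y‖)
    (x y : Fin d → ℝ) :
    L y ≤ L x + (∑ i, grad x i * (y i - x i)) + H / 2 * ‖y - x‖ ^ 2 := by
  set v := y - x with hv
  have hpath : ∀ s : ℝ, HasDerivAt (fun s : ℝ => L (x + s • v))
      (∑ i, grad (x + s • v) i * v i) s := by
    intro s
    have h1 : HasDerivAt (fun s : ℝ => x + s • v) v s := by
      simpa using ((hasDerivAt_id s).smul_const v).const_add x
    have h2 := (hderiv (x + s • v)).comp_hasDerivAt s h1
    refine h2.congr_deriv ?_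
    simp [ContinuousLinearMap.sum_apply, ContinuousLinearMap.smul_apply,
      ContinuousLinearMap.proj_apply, smul_eq_mul]
  have hlip : ∀ i, Continuous fun z : Fin d → ℝ => grad z i := by
    intro i
    have : LipschitzWith (Real.toNNReal H) (fun z => grad z i) := by
      apply LipschitzWith.of_dist_le_mul
      intro a b
      have h1 : |grad a i - grad b i| ≤ ∑ j, |grad a j - grad b j| :=
        Finset.single_le_sum (f := fun j => |grad a j - grad b j|)
          (fun j _ => abs_nonneg _) (Finset.mem_univ i)
      have h2 := hsmooth a b
      rw [Real.dist_eq, dist_eq_norm, Real.coe_toNNReal H hH]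
      linarith
    exact this.continuous
  have hcont : Continuous fun s : ℝ => ∑ i, grad (x + s • v) i * v i := by
    apply continuous_finset_sum
    intro i _
    exact ((hlip i).comp (continuous_const.add (continuous_id.smul continuous_const))).mul continuous_const
  have hint : IntervalIntegrable (fun s : ℝ => ∑ i, grad (x + s • v) i * v i) MeasureTheory.volume 0 1 := hcont.intervalIntegrable 0 1
  have key := intervalIntegral.integral_eq_sub_of_hasDerivAt
    (f := fun s : ℝ => L (x + s • v)) (fun s _ => hpath s) hint
  have hxy : x + (1:ℝ) • v = y := by simp [hv]
  have key2 : (∫ s in (0:ℝ)..1, ∑ i, grad (x + s • v) i * v i) = L y - L x := by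
    rw [key]; simp [hv]
  have hb : ∀ s ∈ Set.Icc (0:ℝ) 1,
      (∑ i, grad (x + s • v) i * v i) ≤ (∑ i, grad x i * v i) + (H * ‖v‖ ^ 2) * s := by
    intro s hs
    have hz : (x + s • v) - x = s • v := by abel
    have h1 : ∑ i, |grad (x + s • v) i - grad x i| ≤ H * (s * ‖v‖) := by
      have := hsmooth (x + s • v) x
      rwa [hz, norm_smul, Real.norm_eq_abs, abs_of_nonneg hs.1] at this
    have h2 : ∑ i, grad (x + s • v) i * v i - ∑ i, grad x i * v i
        ≤ (∑ i, |grad (x + s • v) i - grad x i|) * ‖v‖ := by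
      rw [← Finset.sum_sub_distrib, Finset.sum_mul]
      apply Finset.sum_le_sum
      intro i _
      have : grad (x + s • v) i * v i - grad x i * v i
          = (grad (x + s • v) i - grad x i) * v i := by ring
      rw [this]
      calc (grad (x + s • v) i - grad x i) * v i
          ≤ |(grad (x + s • v) i - grad x i) * v i| := le_abs_self _
        _ = |grad (x + s • v) i - grad x i| * |v i| := abs_mul _ _
        _ ≤ |grad (x + s • v) i - grad x i| * ‖v‖ := by
            apply mul_le_mul_of_nonneg_left _ (abs_nonneg _)
            simpa using norm_le_pi_norm v i
    have h3 : (∑ i, |grad (x + s • v) i - grad x i|) * ‖v‖ ≤ H * (s * ‖v‖) * ‖v‖ :=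
      mul_le_mul_of_nonneg_right h1 (norm_nonneg _)
    nlinarith [norm_nonneg v]
  have hint2 : IntervalIntegrable (fun s : ℝ => (∑ i, grad x i * v i) + (H * ‖v‖ ^ 2) * s)
      MeasureTheory.volume 0 1 := (Continuous.intervalIntegrable (continuous_const.add (continuous_const.mul continuous_id')) 0 1)
  have hmono := intervalIntegral.integral_mono_on (by norm_num : (0:ℝ) ≤ 1) hint hint2 hb
  have hval : (∫ s in (0:ℝ)..1, ((∑ i, grad x i * v i) + (H * ‖v‖ ^ 2) * s))
      = (∑ i, grad x i * v i) + H / 2 * ‖v‖ ^ 2 := by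
    rw [intervalIntegral.integral_add (f := fun _ => ∑ i, grad x i * v i) (g := fun s => H * ‖v‖ ^ 2 * s) (intervalIntegrable_const)
      ((Continuous.intervalIntegrable (continuous_const.mul continuous_id') 0 1)),
      intervalIntegral.integral_const, intervalIntegral.integral_const_mul, integral_id]
    norm_num
    ring
  rw [key2, hval] at hmono
  have : ∀ i, v i = y i - x i := fun i => by simp [hv]
  simp only [this] at hmono ⊢
  linarith

lemma sgd_sign_mul (a : ℝ) : a * Real.sign a = |a| := by
  rcases lt_trichotomy a 0 with h|h|h
  · rw [Real.sign_of_neg h, abs_of_neg h]; ring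
  · simp [h]
  · rw [Real.sign_of_pos h, abs_of_pos h]; ring

lemma sgd_abs_sign_le (a : ℝ) : |Real.sign a| ≤ 1 := by
  rcases lt_trichotomy a 0 with h|h|h
  · rw [Real.sign_of_neg h]; norm_num
  · simp [h]
  · rw [Real.sign_of_pos h]; norm_num

/-- convergence of SignGD with the optimally tuned step size. -/
theorem stmt_3 (d : ℕ) (x₀ : Fin d → ℝ) (L : (Fin d → ℝ) → ℝ) (grad : (Fin d → ℝ) → (Fin d → ℝ)) (H : ℝ)
    (hH : 0 < H)
    (hderiv : ∀ x, HasFDerivAt L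
      (∑ i, grad x i • (ContinuousLinearMap.proj i : (Fin d → ℝ) →L[ℝ] ℝ)) x)
    (hsmooth : ∀ x y, ∑ i, |grad x i - grad y i| ≤ H * ‖x - y‖)
    (hbdd : BddBelow (Set.range L))
    (T : ℕ) (hT : 0 < T)
    (η : ℝ) (hη : η = Real.sqrt (2 * (L (x₀) - sInf (Set.range L)) / (T * H)))
    (x : ℕ → Fin d → ℝ) (hx0 : x 0 = x₀)
    (hupd : ∀ t, ∀ i, x (t + 1) i = x t i - η * Real.sign (grad (x t) i)) :
    ∃ t < T, ∑ i, |grad (x t) i| ≤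
      Real.sqrt (2 * H * (L x₀ - sInf (Set.range L)) / T) := by
  set Δ := L x₀ - sInf (Set.range L) with hΔdef
  have hinf : ∀ z, sInf (Set.range L) ≤ L z := fun z => csInf_le hbdd ⟨z, rfl⟩
  have hΔ0 : 0 ≤ Δ := by have := hinf x₀; simp [hΔdef]; linarith
  set B := Real.sqrt (2 * H * Δ / T) with hBdef
  have hB0 : 0 ≤ B := Real.sqrt_nonneg _
  rcases eq_or_lt_of_le hΔ0 with hΔeq | hΔpos
  · -- Δ = 0 : x₀ is a global min, gradient vanishes
    refine ⟨0, hT, ?_⟩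
    have hmin : IsLocalMin L x₀ := by
      apply Filter.Eventually.of_forall
      intro z
      have := hinf z
      have hx : L x₀ = sInf (Set.range L) := by simp [hΔdef] at hΔeq; linarith
      linarith
    have h0 := hmin.hasFDerivAt_eq_zero (hderiv x₀)
    have hg : ∀ i, grad x₀ i = 0 := by
      intro i
      have := DFunLike.congr_fun h0 (Pi.single i (1:ℝ))
      simpa [ContinuousLinearMap.sum_apply, ContinuousLinearMap.smul_apply,
        ContinuousLinearMap.proj_apply, Pi.single_apply, mul_ite,
        Finset.sum_ite_eq'] using this
    rw [hx0]
    simp [hg]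
    exact hB0
  · -- Δ > 0
    have hη0 : 0 < η := by
      rw [hη]
      apply Real.sqrt_pos.2
      apply div_pos (by linarith) (by positivity)
    have hηsq : η ^ 2 = 2 * Δ / (T * H) := by
      rw [hη, Real.sq_sqrt]
      positivity
    have hstep : ∀ t, L (x (t+1)) ≤ L (x t) - η * (∑ i, |grad (x t) i|) + H / 2 * η ^ 2 := by
      intro t
      have hd := sgd_descent d L grad H hH.le hderiv hsmooth (x t) (x (t+1))
      have h1 : ∑ i, grad (x t) i * (x (t+1) i - x t i) = -η * ∑ i, |grad (x t) i| := by
        rw [Finset.mul_sum]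
        apply Finset.sum_congr rfl
        intro i _
        rw [hupd t i]
        have := sgd_sign_mul (grad (x t) i)
        ring_nf
        nlinarith [sgd_sign_mul (grad (x t) i)]
      have h2 : ‖x (t+1) - x t‖ ≤ η := by
        apply (pi_norm_le_iff_of_nonneg hη0.le).2
        intro i
        rw [Pi.sub_apply, hupd t i, Real.norm_eq_abs]
        have h3 : x t i - η * Real.sign (grad (x t) i) - x t i = -(η * Real.sign (grad (x t) i)) := by ring
        rw [h3, abs_neg, abs_mul, abs_of_nonneg hη0.le]
        calc η * |Real.sign (grad (x t) i)| ≤ η * 1 :=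
              mul_le_mul_of_nonneg_left (sgd_abs_sign_le _) hη0.le
          _ = η := mul_one η
      have h4 : H / 2 * ‖x (t+1) - x t‖ ^ 2 ≤ H / 2 * η ^ 2 := by
        apply mul_le_mul_of_nonneg_left _ (by linarith)
        exact pow_le_pow_left₀ (norm_nonneg _) h2 2
      rw [h1] at hd
      linarith
    have tele : ∀ n : ℕ, η * ∑ t ∈ Finset.range n, (∑ i, |grad (x t) i|)
        ≤ L x₀ - L (x n) + n * (H / 2 * η ^ 2) := by
      intro n
      induction n with
      | zero => simp [hx0]
      | succ n ih =>
        rw [Finset.sum_range_succ, mul_add]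
        have := hstep n
        push_cast
        linarith
    have hsum : η * ∑ t ∈ Finset.range T, (∑ i, |grad (x t) i|) ≤ 2 * Δ := by
      have h5 := tele T
      have h6 := hinf (x T)
      have h7 : (T : ℝ) * (H / 2 * η ^ 2) = Δ := by
        rw [hηsq]
        field_simp
      rw [h7] at h5
      simp only [hΔdef]
      linarith
    have hTB : (T : ℝ) * B * η = 2 * Δ := by
      have hBsq : B ^ 2 = 2 * H * Δ / T := by
        rw [hBdef, Real.sq_sqrt]; positivity
      have hT0 : (0:ℝ) < T := by exact_mod_cast hT
      have hprod : (B * η) ^ 2 = (2 * Δ / T) ^ 2 := by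
        rw [mul_pow, hBsq, hηsq]
        field_simp
      have h8 : B * η = 2 * Δ / T := by
        have h9 : 0 ≤ B * η := mul_nonneg hB0 hη0.le
        have h10 : 0 ≤ 2 * Δ / T := by positivity
        nlinarith
      rw [mul_assoc, h8]
      field_simp
    have hsum2 : ∑ t ∈ Finset.range T, (∑ i, |grad (x t) i|)
        ≤ ∑ t ∈ Finset.range T, B := by
      rw [Finset.sum_const, Finset.card_range, nsmul_eq_mul]
      rw [← mul_le_mul_iff_right₀ hη0]
      calc η * ∑ t ∈ Finset.range T, (∑ i, |grad (x t) i|) ≤ 2 * Δ := hsum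
        _ = η * ((T:ℝ) * B) := by rw [← hTB]; ring
    obtain ⟨t, ht, hle⟩ := Finset.exists_le_of_sum_le ⟨0, Finset.mem_range.2 hT⟩ hsum2
    exact ⟨t, Finset.mem_range.1 ht, hle⟩
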